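/- arXiv:2301.04403 — 2 statements merged into one kernel-verified Lean document; each statement's English description precedes it below -/
import Mathlib

section
/- There exists a constant C > 0 such that for all f, g ∈ H¹(𝕋): ‖J^{−1}( g · (J f) )‖ ≤ C min{ ‖f‖ ‖g‖₁, ‖f‖₁ ‖g‖ }. -/
open MeasureTheory Complex

noncomputable section

local notation "𝕋" => AddCircle (2 * Real.pi)

instance : Fact (0 < 2 * Real.pi) := ⟨by positivity⟩

def fc (f : 𝕋 → ℂ) (k : ℤ) : ℂ := fourierCoeff f k

def sNormSq (α : ℝ) (f : 𝕋 → ℂ) : ℝ :=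
  ∑' k : ℤ, (1 + (k : ℝ) ^ 2) ^ α * ‖fc f k‖ ^ 2

def sNorm (α : ℝ) (f : 𝕋 → ℂ) : ℝ := Real.sqrt (sNormSq α f)

def MemH (α : ℝ) (f : 𝕋 → ℂ) : Prop :=
  MemLp f 2 volume ∧ Summable fun k : ℤ => (1 + (k : ℝ) ^ 2) ^ α * ‖fc f k‖ ^ 2

def mulOp (m : ℤ → ℂ) (f : 𝕋 → ℂ) : 𝕋 → ℂ :=
  fun x => ∑' k : ℤ, m k * fc f k * fourier k x

def cconj (f : 𝕋 → ℂ) : 𝕋 → ℂ := fun x => (starRingEnd ℂ) (f x)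

/-- Bessel potential `J^α`, with symbol `(1+k²)^{α/2}`. -/
def Jop (α : ℝ) : (𝕋 → ℂ) → (𝕋 → ℂ) :=
  mulOp fun k => (((1 + (k : ℝ) ^ 2) ^ (α / 2) : ℝ) : ℂ)

/-- The operator `|∂ₓ|^α`, with symbol `|k|^α` for `k ≠ 0`, annihilating the zero mode. -/
def absD (α : ℝ) : (𝕋 → ℂ) → (𝕋 → ℂ) :=
  mulOp fun k => if k = 0 then 0 else ((|(k : ℝ)| ^ α : ℝ) : ℂ)

/-- `∂ₓ^m` for `m : ℤ`: symbol `(ik)^m` for `k ≠ 0`, annihilating the zero mode. -/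
def Dpow (m : ℤ) : (𝕋 → ℂ) → (𝕋 → ℂ) :=
  mulOp fun k => if k = 0 then 0 else (Complex.I * (k : ℂ)) ^ m

/-- Symbol of `⟨∂ₓ²⟩`: `√(k² + k⁴)`. -/
def brSym (k : ℤ) : ℝ := Real.sqrt ((k : ℝ) ^ 2 + (k : ℝ) ^ 4)

/-- `e^{it∂ₓ²}`, with symbol `e^{-itk²}`. -/
def eitDxx (t : ℝ) : (𝕋 → ℂ) → (𝕋 → ℂ) :=
  mulOp fun k => Complex.exp (-(Complex.I * t * (k : ℂ) ^ 2))

/-- `e^{it∂ₓ²} - 1`, with symbol `e^{-itk²} - 1`. -/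
def eitDxxm1 (t : ℝ) : (𝕋 → ℂ) → (𝕋 → ℂ) :=
  mulOp fun k => Complex.exp (-(Complex.I * t * (k : ℂ) ^ 2)) - 1

/-- `⟨∂ₓ²⟩⁻¹`, symbol `(k²+k⁴)^{-1/2}` for `k ≠ 0`, `0` at `k = 0`. -/
def brInv : (𝕋 → ℂ) → (𝕋 → ℂ) :=
  mulOp fun k => if k = 0 then 0 else (((brSym k)⁻¹ : ℝ) : ℂ)

/-- Symbol of `A = ⟨∂ₓ²⟩ + ∂ₓ²`: `√(k²+k⁴) - k²`. -/
def Asym (k : ℤ) : ℝ := brSym k - (k : ℝ) ^ 2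

/-- `A = ⟨∂ₓ²⟩ + ∂ₓ²`. -/
def Aop : (𝕋 → ℂ) → (𝕋 → ℂ) := mulOp fun k => ((Asym k : ℝ) : ℂ)

/-- `e^{itA} - 1`. -/
def eitAm1 (t : ℝ) : (𝕋 → ℂ) → (𝕋 → ℂ) :=
  mulOp fun k => Complex.exp (Complex.I * t * ((Asym k : ℝ) : ℂ)) - 1

/-- Symbol of `B = ⟨∂ₓ²⟩⁻¹ ∂ₓ²`: `-k²/√(k²+k⁴)` for `k ≠ 0`, `0` at `k = 0`. -/
def Bsym (k : ℤ) : ℝ := if k = 0 then 0 else -(k : ℝ) ^ 2 / brSym k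

/-- `B = ⟨∂ₓ²⟩⁻¹ ∂ₓ²`. -/
def Bop : (𝕋 → ℂ) → (𝕋 → ℂ) := mulOp fun k => ((Bsym k : ℝ) : ℂ)

/-- `e^{it⟨∂ₓ²⟩}`, with symbol `e^{it√(k²+k⁴)}`. -/
def eitBr (t : ℝ) : (𝕋 → ℂ) → (𝕋 → ℂ) :=
  mulOp fun k => Complex.exp (Complex.I * t * ((brSym k : ℝ) : ℂ))

/-- `e^{it⟨∂ₓ²⟩} - 1`. -/
def eitBrm1 (t : ℝ) : (𝕋 → ℂ) → (𝕋 → ℂ) :=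
  mulOp fun k => Complex.exp (Complex.I * t * ((brSym k : ℝ) : ℂ)) - 1

/-- `B^τ = B e^{iτ⟨∂ₓ²⟩}`, as a single multiplier. -/
def Btau (τ : ℝ) : (𝕋 → ℂ) → (𝕋 → ℂ) :=
  mulOp fun k => ((Bsym k : ℝ) : ℂ) * Complex.exp (Complex.I * τ * ((brSym k : ℝ) : ℂ))

/-- `ψ₁(y) = ∫₀¹ e^{ys} ds`. -/
def psi1 (y : ℂ) : ℂ := ∫ s in (0 : ℝ)..1, Complex.exp (y * s)

/-- `ψ₁(it∂ₓ²)`, with symbol `ψ₁(-itk²)`. -/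
def psiOp (t : ℝ) : (𝕋 → ℂ) → (𝕋 → ℂ) :=
  mulOp fun k => psi1 (-(Complex.I * t * (k : ℂ) ^ 2))

/-- Sobolev norm (squared) of a Fourier coefficient sequence. -/
def seqNormSq (α : ℝ) (c : ℤ → ℂ) : ℝ :=
  ∑' k : ℤ, (1 + (k : ℝ) ^ 2) ^ α * ‖c k‖ ^ 2

def seqNorm (α : ℝ) (c : ℤ → ℂ) : ℝ := Real.sqrt (seqNormSq α c)

/-- Fourier coefficients of `P₁^τ(f)`. -/
def P1coef (τ : ℝ) (f : 𝕋 → ℂ) (k : ℤ) : ℂ :=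
  if k = 0 then 0 else
    ∑' k₁ : ℤ, ((k₁ : ℂ) ^ 2 / (k : ℂ) ^ 2) *
      (∫ s in (0 : ℝ)..τ,
        (Complex.exp (-(2 * Complex.I * s * (((k - k₁ : ℤ)) : ℂ) ^ 2)) - 1) *
        (Complex.exp (-(2 * Complex.I * s * (k : ℂ) * (k₁ : ℂ))) - 1)) *
      fc (cconj f) k₁ * fc (cconj f) (k - k₁)

/-- Fourier coefficients of `P₂^τ(f)`. -/
def P2coef (τ : ℝ) (f : 𝕋 → ℂ) (k : ℤ) : ℂ :=
  if k = 0 then 0 else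
    ∑' k₁ : ℤ, ((2 * (k₁ : ℂ) * (((k - k₁ : ℤ)) : ℂ)) / (k : ℂ) ^ 2) *
      (∫ s in (0 : ℝ)..τ,
        (Complex.exp (-(2 * Complex.I * s * (k : ℂ) ^ 2)) - 1) *
        (Complex.exp (2 * Complex.I * s * (k₁ : ℂ) * (((k - k₁ : ℤ)) : ℂ)) - 1)) *
      fc (cconj f) k₁ * fc (cconj f) (k - k₁)

def L1op (τ : ℝ) (f : 𝕋 → ℂ) : 𝕋 → ℂ :=
  (-(Complex.I / 2)) • Dpow (-2) ((eitDxx (2 * τ) (Dpow (-2) (cconj f))) * (Dpow 2 (cconj f)))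
    + (Complex.I / 2) • Dpow (-2) ((Dpow 2 (cconj f)) * (Dpow (-2) (cconj f)))

def L2op (τ : ℝ) (f : 𝕋 → ℂ) : 𝕋 → ℂ :=
  (-(Complex.I / 2)) • eitDxx τ (Dpow (-3) ((eitDxx τ (Dpow 1 (cconj f))) * (eitDxx (-τ) (cconj f))))
    + (Complex.I / 2) • Dpow (-3) ((Dpow 1 (cconj f)) * (cconj f))
    - (τ : ℂ) • Dpow (-2) ((Dpow 2 (cconj f)) * (cconj f))

def L3op (τ : ℝ) (f : 𝕋 → ℂ) : 𝕋 → ℂ :=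
  (-Complex.I) • Dpow (-4) (eitDxxm1 (2 * τ) ((Dpow 1 (cconj f)) * (Dpow 1 (cconj f))))

def L4op (τ : ℝ) (f : 𝕋 → ℂ) : 𝕋 → ℂ :=
  Complex.I • Dpow (-2) (eitDxx (-τ) ((eitDxx τ (cconj f)) * (eitDxx τ (cconj f))))
    - Complex.I • Dpow (-2) ((cconj f) * (cconj f))
    - ((2 * τ : ℝ) : ℂ) • Dpow (-2) ((Dpow 1 (cconj f)) * (Dpow 1 (cconj f)))

def I1op (τ : ℝ) (f : 𝕋 → ℂ) : 𝕋 → ℂ :=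
  (Complex.I / 2) • ((Dpow (-1) f) * (Dpow (-1) f)
    - eitDxx τ ((eitDxx (-τ) (Dpow (-1) f)) * (eitDxx (-τ) (Dpow (-1) f))))

def I2op (τ : ℝ) (f : 𝕋 → ℂ) : 𝕋 → ℂ :=
  (-(Complex.I / 2)) • eitDxx τ (Dpow (-1) ((eitDxx (-τ) f) * (eitDxx τ (Dpow (-1) (cconj f)))))
    + (Complex.I / 2) • Dpow (-1) (f * (Dpow (-1) (cconj f)))
    + fun _ => ((τ * sNormSq 0 f : ℝ) : ℂ)

/-- The first-order low regularity exponential integrator `Ψ₁^τ` at time level `t_n`. -/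
def Psi1 (τ a b tn : ℝ) (f : 𝕋 → ℂ) : 𝕋 → ℂ :=
  eitBr τ f
    - (Complex.I / 4) • Btau τ ((2 : ℂ) • L1op τ f + (2 : ℂ) • L2op τ f + L3op τ f
        + L4op τ f + I1op τ f + (2 : ℂ) • I2op τ f)
    - (Complex.I * τ * ((a * tn + b : ℝ) : ℂ)) • Btau τ (f + psiOp (2 * τ) (cconj f))

/-- The additional-regularity exponent `p(r)` (with parameter `ε` standing for `+`). -/
def preg (ε r : ℝ) : ℝ :=
  if r = 1 then 1
  else if r ≤ 7/6 then 3 - 2*r + ε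
  else if r ≤ 17/12 then 2/3
  else if r ≤ 3/2 then 7/2 - 2*r + ε
  else if r < 5/2 then 5/4 - r/2
  else if r = 5/2 then ε
  else 0

/-- The additional-regularity exponent `q(r)` for `P₂`. -/
def qreg (r : ℝ) : ℝ := if r ≤ 5/2 then 5/4 - r/2 else 0

open scoped ENNReal NNReal
open AddCircle

local notation "μh" => (AddCircle.haarAddCircle : Measure 𝕋)


lemma my_norm_fourier (n : ℤ) (x : 𝕋) : ‖(fourier n x : ℂ)‖ = 1 := Circle.norm_coe _

lemma my_integral_fourier (m : ℤ) :
    (∫ x : 𝕋, fourier m x ∂μh) = if m = 0 then 1 else 0 := by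
  split_ifs with h
  · subst h
    have : ⇑(@fourier (2*Real.pi) 0) = (fun _ => (1:ℂ)) := by ext1; exact fourier_zero
    rw [show (fun x : 𝕋 => fourier 0 x) = (fun _ => (1:ℂ)) from this]
    simp
  · exact integral_eq_zero_of_add_right_eq_neg (μ := μh)
      (fourier_add_half_inv_index h Real.two_pi_pos)

lemma my_ennnorm_tsum_le {ι : Type*} [Countable ι] (f : ι → ℂ) :
    (‖∑' i, f i‖₊ : ℝ≥0∞) ≤ ∑' i, (‖f i‖₊ : ℝ≥0∞) := by
  by_cases hs : Summable fun i => ‖f i‖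
  · have h1 : ‖∑' i, f i‖ ≤ ∑' i, ‖f i‖ := norm_tsum_le_tsum_norm hs
    calc (‖∑' i, f i‖₊ : ℝ≥0∞) = ENNReal.ofReal ‖∑' i, f i‖ := (ofReal_norm _).symm
      _ ≤ ENNReal.ofReal (∑' i, ‖f i‖) := ENNReal.ofReal_le_ofReal h1
      _ = ∑' i, ENNReal.ofReal ‖f i‖ :=
        ENNReal.ofReal_tsum_of_nonneg (fun _ => norm_nonneg _) hs
      _ = ∑' i, (‖f i‖₊ : ℝ≥0∞) := tsum_congr fun i => ofReal_norm _
  · have : ¬ Summable f := fun hf => hs (summable_norm_iff.mpr hf)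
    rw [tsum_eq_zero_of_not_summable this]
    simp

lemma my_fc_tsum (d : ℤ → ℂ) (hd : Summable fun l => ‖d l‖) (k : ℤ) :
    fc (fun x => ∑' l : ℤ, d l * fourier l x) k = d k := by
  have hd' : Summable fun l => ‖d l‖₊ := by
    rw [← NNReal.summable_coe]; exact hd
  have key : ∀ x : 𝕋, fourier (-k) x • (∑' l : ℤ, d l * fourier l x)
      = ∑' l : ℤ, d l * fourier (l + -k) x := by
    intro x
    rw [smul_eq_mul, ← tsum_mul_left]
    exact tsum_congr fun l => by rw [fourier_add]; ring
  rw [fc, fourierCoeff]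
  simp_rw [key]
  rw [integral_tsum (fun l => (Continuous.aestronglyMeasurable (by fun_prop)))]
  · calc (∑' l : ℤ, ∫ x : 𝕋, d l * fourier (l + -k) x ∂μh)
        = ∑' l : ℤ, d l * ∫ x : 𝕋, fourier (l + -k) x ∂μh := by
          simp_rw [integral_const_mul]
      _ = d k := by
          simp_rw [my_integral_fourier]
          rw [tsum_eq_single k]
          · simp
          · intro l hl
            have : ¬ (l + -k = 0) := by omega
            simp [this]
  · have : ∀ l : ℤ, (∫⁻ x : 𝕋, ‖d l * fourier (l + -k) x‖₊ ∂μh) = (‖d l‖₊ : ℝ≥0∞) := by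
      intro l
      have : ∀ x : 𝕋, (‖d l * fourier (l + -k) x‖₊ : ℝ≥0∞) = (‖d l‖₊ : ℝ≥0∞) := by
        intro x
        rw [nnnorm_mul]
        have : ‖fourier (l + -k) x‖₊ = 1 := by
          ext; simp [my_norm_fourier, Circle.norm_coe]
        rw [this, mul_one]
      simp_rw [this]
      simp
    simp_rw [enorm_eq_nnnorm, this]
    exact ENNReal.tsum_coe_ne_top_iff_summable.mpr hd'

lemma my_fc_mul_tsum (g : 𝕋 → ℂ) (hg : Integrable g μh) (c : ℤ → ℂ)
    (hc : Summable fun l => ‖c l‖) (k : ℤ) :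
    fc (fun x => g x * ∑' l : ℤ, c l * fourier l x) k = ∑' l : ℤ, c l * fc g (k - l) := by
  have hc' : Summable fun l => ‖c l‖₊ := by rw [← NNReal.summable_coe]; exact hc
  have key : ∀ x : 𝕋, fourier (-k) x • (g x * ∑' l : ℤ, c l * fourier l x)
      = ∑' l : ℤ, c l * (fourier (-(k - l)) x * g x) := by
    intro x
    rw [smul_eq_mul, ← mul_assoc, ← tsum_mul_left (a := fourier (-k) x * g x)]
    refine tsum_congr fun l => ?_
    have : (-(k - l)) = l + -k := by ring
    rw [this, fourier_add]
    ring
  rw [fc, fourierCoeff]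
  simp_rw [key]
  rw [integral_tsum]
  · refine tsum_congr fun l => ?_
    rw [integral_const_mul]
    rfl
  · exact fun l => (((fourier _).continuous.aestronglyMeasurable).mul
      hg.1).const_mul _
  · have hb : ∀ l : ℤ, (∫⁻ x : 𝕋, ‖c l * (fourier (-(k - l)) x * g x)‖₊ ∂μh)
        = (‖c l‖₊ : ℝ≥0∞) * ∫⁻ x : 𝕋, ‖g x‖₊ ∂μh := by
      intro l
      have : ∀ x : 𝕋, ((‖c l * (fourier (-(k - l)) x * g x)‖₊ : ℝ≥0∞))
          = (‖c l‖₊ : ℝ≥0∞) * ‖g x‖₊ := by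
        intro x
        rw [nnnorm_mul, nnnorm_mul]
        have : ‖fourier (-(k - l)) x‖₊ = 1 := by ext; simp [my_norm_fourier, Circle.norm_coe]
        rw [this, one_mul]
        push_cast
        ring
      simp_rw [this]
      rw [lintegral_const_mul' _ _ ENNReal.coe_ne_top]
    simp_rw [enorm_eq_nnnorm, hb]
    rw [ENNReal.tsum_mul_right]
    exact ENNReal.mul_ne_top (ENNReal.tsum_coe_ne_top_iff_summable.mpr hc')
      hg.2.ne

lemma my_ecs (F G : ℤ → ℝ≥0∞) :
    ∑' k, F k * G k ≤ (∑' k, F k ^ 2) ^ ((1:ℝ)/2) * (∑' k, G k ^ 2) ^ ((1:ℝ)/2) := by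
  have hpq : (2:ℝ).HolderConjugate 2 := .two_two
  have h := ENNReal.lintegral_mul_le_Lp_mul_Lq (Measure.count : Measure ℤ) hpq
    (f := F) (g := G) (measurable_of_countable _).aemeasurable
    (measurable_of_countable _).aemeasurable
  simp_rw [MeasureTheory.lintegral_count, Pi.mul_apply] at h
  have h2 : ∀ x : ℝ≥0∞, x ^ (2:ℝ) = x ^ 2 := fun x => ENNReal.rpow_two x
  simpa [h2] using h

lemma my_rpow_half_sq (x : ℝ≥0∞) : (x ^ ((1:ℝ)/2)) ^ 2 = x := by
  rw [← ENNReal.rpow_two, ← ENNReal.rpow_mul]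
  norm_num

lemma my_ecs_sq (F G : ℤ → ℝ≥0∞) :
    (∑' k, F k * G k) ^ 2 ≤ (∑' k, F k ^ 2) * (∑' k, G k ^ 2) := by
  have h := my_ecs F G
  calc (∑' k, F k * G k) ^ 2
      ≤ ((∑' k, F k ^ 2) ^ ((1:ℝ)/2) * (∑' k, G k ^ 2) ^ ((1:ℝ)/2)) ^ 2 := by
        rw [pow_two, pow_two]; exact mul_le_mul' h h
    _ = (∑' k, F k ^ 2) * (∑' k, G k ^ 2) := by
        rw [mul_pow, my_rpow_half_sq, my_rpow_half_sq]

lemma my_shift_tsum (a : ℤ → ℝ≥0∞) (k : ℤ) : (∑' l, a (k - l)) = ∑' m, a m :=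
  (Equiv.subLeft k).tsum_eq a

lemma my_young (a b : ℤ → ℝ≥0∞) :
    ∑' k, (∑' l, a (k - l) * b l) ^ 2 ≤ (∑' m, a m) ^ 2 * ∑' l, b l ^ 2 := by
  have step : ∀ k, (∑' l, a (k - l) * b l) ^ 2
      ≤ (∑' m, a m) * ∑' l, a (k - l) * b l ^ 2 := by
    intro k
    have h := my_ecs_sq (fun l => (a (k - l)) ^ ((1:ℝ)/2))
      (fun l => (a (k - l)) ^ ((1:ℝ)/2) * b l)
    have e1 : ∀ l : ℤ, (a (k - l)) ^ ((1:ℝ)/2) * ((a (k - l)) ^ ((1:ℝ)/2) * b l)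
        = a (k - l) * b l := by
      intro l
      rw [← mul_assoc, ← pow_two, my_rpow_half_sq]
    have e2 : ∀ l : ℤ, ((a (k - l)) ^ ((1:ℝ)/2)) ^ 2 = a (k - l) := fun l => my_rpow_half_sq _
    have e3 : ∀ l : ℤ, ((a (k - l)) ^ ((1:ℝ)/2) * b l) ^ 2 = a (k - l) * b l ^ 2 := by
      intro l
      rw [mul_pow, my_rpow_half_sq]
    simp_rw [e1, e2, e3] at h
    calc (∑' l, a (k - l) * b l) ^ 2 ≤ (∑' l, a (k - l)) * ∑' l, a (k - l) * b l ^ 2 := h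
      _ = (∑' m, a m) * ∑' l, a (k - l) * b l ^ 2 := by rw [my_shift_tsum]
  calc ∑' k, (∑' l, a (k - l) * b l) ^ 2
      ≤ ∑' k, (∑' m, a m) * ∑' l, a (k - l) * b l ^ 2 := ENNReal.tsum_le_tsum step
    _ = (∑' m, a m) * ∑' k, ∑' l, a (k - l) * b l ^ 2 := ENNReal.tsum_mul_left
    _ = (∑' m, a m) * ∑' l, ∑' k, a (k - l) * b l ^ 2 := by rw [ENNReal.tsum_comm]
    _ = (∑' m, a m) * ∑' l, (∑' k, a (k - l)) * b l ^ 2 := by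
        congr 1; exact tsum_congr fun l => ENNReal.tsum_mul_right
    _ = (∑' m, a m) * ((∑' m, a m) * ∑' l, b l ^ 2) := by
        congr 1
        calc (∑' l, (∑' k, a (k - l)) * b l ^ 2)
            = ∑' l, (∑' m, a m) * b l ^ 2 := by
              refine tsum_congr fun l => ?_
              congr 1
              exact (Equiv.subRight l).tsum_eq a
          _ = (∑' m, a m) * ∑' l, b l ^ 2 := ENNReal.tsum_mul_left
    _ = (∑' m, a m) ^ 2 * ∑' l, b l ^ 2 := by ring

lemma my_sq_add_le (x y : ℝ≥0∞) : (x + y) ^ 2 ≤ 3 * x ^ 2 + 3 * y ^ 2 := by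
  have hxy : x * y ≤ x ^ 2 + y ^ 2 := by
    rcases le_total x y with h | h
    · calc x * y ≤ y * y := mul_le_mul_left h y
        _ = y ^ 2 := (pow_two y).symm
        _ ≤ x ^ 2 + y ^ 2 := le_add_self
    · calc x * y ≤ x * x := mul_le_mul_right h x
        _ = x ^ 2 := (pow_two x).symm
        _ ≤ x ^ 2 + y ^ 2 := le_self_add
  calc (x + y) ^ 2 = x ^ 2 + y ^ 2 + (x * y + x * y) := by ring
    _ ≤ x ^ 2 + y ^ 2 + ((x ^ 2 + y ^ 2) + (x ^ 2 + y ^ 2)) := by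
        exact add_le_add_right (add_le_add hxy hxy) _
    _ = 3 * x ^ 2 + 3 * y ^ 2 := by ring

lemma my_sqrt_tri (u v : ℝ) :
    (1 + (u + v) ^ 2) ^ ((1:ℝ)/2) ≤ (1 + u ^ 2) ^ ((1:ℝ)/2) + (1 + v ^ 2) ^ ((1:ℝ)/2) := by
  rw [← Real.sqrt_eq_rpow, ← Real.sqrt_eq_rpow, ← Real.sqrt_eq_rpow]
  have hx : Real.sqrt (1 + u ^ 2) ^ 2 = 1 + u ^ 2 := Real.sq_sqrt (by positivity)
  have hy : Real.sqrt (1 + v ^ 2) ^ 2 = 1 + v ^ 2 := Real.sq_sqrt (by positivity)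
  have hux : |u| ≤ Real.sqrt (1 + u ^ 2) := by
    rw [← Real.sqrt_sq_eq_abs]
    exact Real.sqrt_le_sqrt (by nlinarith)
  have hvy : |v| ≤ Real.sqrt (1 + v ^ 2) := by
    rw [← Real.sqrt_sq_eq_abs]
    exact Real.sqrt_le_sqrt (by nlinarith)
  have huv : u * v ≤ Real.sqrt (1 + u ^ 2) * Real.sqrt (1 + v ^ 2) := by
    calc u * v ≤ |u * v| := le_abs_self _
      _ = |u| * |v| := abs_mul u v
      _ ≤ Real.sqrt (1 + u ^ 2) * Real.sqrt (1 + v ^ 2) :=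
        mul_le_mul hux hvy (abs_nonneg _) (Real.sqrt_nonneg _)
  have h : 1 + (u + v) ^ 2 ≤ (Real.sqrt (1 + u ^ 2) + Real.sqrt (1 + v ^ 2)) ^ 2 := by
    nlinarith
  calc Real.sqrt (1 + (u + v) ^ 2)
      ≤ Real.sqrt ((Real.sqrt (1 + u ^ 2) + Real.sqrt (1 + v ^ 2)) ^ 2) := Real.sqrt_le_sqrt h
    _ = Real.sqrt (1 + u ^ 2) + Real.sqrt (1 + v ^ 2) := Real.sqrt_sq (by positivity)

lemma my_Sone_summable : Summable (fun k : ℤ => 1 / (1 + (k:ℝ) ^ 2)) := by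
  have hn : Summable (fun n : ℕ => 1 / (1 + (n:ℝ) ^ 2)) := by
    have h1 : Summable (fun n : ℕ => 1 / ((n:ℝ) + 1) ^ 2) := by
      have := Real.summable_one_div_nat_pow.mpr (by norm_num : 1 < 2)
      exact_mod_cast (summable_nat_add_iff 1).mpr this
    refine Summable.of_nonneg_of_le (fun n => by positivity) (fun n => ?_) (h1.mul_left 2)
    rw [div_le_iff₀ (by positivity)]
    have : (2:ℝ) * (1 / ((n:ℝ) + 1) ^ 2) = 2 / ((n:ℝ)+1)^2 := by ring
    rw [this, div_mul_eq_mul_div, le_div_iff₀ (by positivity)]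
    nlinarith [sq_nonneg ((n:ℝ) - 1)]
  refine Summable.of_nat_of_neg hn ?_
  simpa using hn

def Sone : ℝ := ∑' k : ℤ, 1 / (1 + (k:ℝ) ^ 2)

lemma my_Sone_nonneg : 0 ≤ Sone := tsum_nonneg fun k => by positivity

def Mw (l : ℤ) : ℝ≥0∞ := ENNReal.ofReal ((1 + (l:ℝ) ^ 2) ^ ((1:ℝ)/2))

def Ww (k : ℤ) : ℝ≥0∞ := ENNReal.ofReal ((1 + (k:ℝ) ^ 2) ^ ((-1:ℝ)/2))

lemma my_W2_sum : (∑' k : ℤ, Ww k ^ 2) = ENNReal.ofReal Sone := by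
  have e : ∀ k : ℤ, Ww k ^ 2 = ENNReal.ofReal (1 / (1 + (k:ℝ) ^ 2)) := by
    intro k
    rw [Ww, ← ENNReal.ofReal_pow (by positivity)]
    congr 1
    rw [← Real.rpow_natCast ((1 + (k:ℝ)^2) ^ ((-1:ℝ)/2)) 2, ← Real.rpow_mul (by positivity)]
    norm_num [Real.rpow_neg_one]
  simp_rw [e]
  rw [Sone, ← ENNReal.ofReal_tsum_of_nonneg (fun k => by positivity) my_Sone_summable]

lemma my_WM (k : ℤ) : Ww k * Mw k = 1 := by
  rw [Ww, Mw, ← ENNReal.ofReal_mul (by positivity)]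
  rw [← Real.rpow_add (by positivity)]
  norm_num

lemma my_Mle (k l : ℤ) : Mw l ≤ Mw (k - l) + Mw k := by
  rw [Mw, Mw, Mw, ← ENNReal.ofReal_add (by positivity) (by positivity)]
  refine ENNReal.ofReal_le_ofReal ?_
  have h := my_sqrt_tri ((l:ℝ) - k) (k:ℝ)
  have e1 : (l:ℝ) - k + k = l := by ring
  rw [e1] at h
  have e2 : (1 + ((l:ℝ) - (k:ℝ)) ^ 2) = (1 + ((k - l : ℤ):ℝ) ^ 2) := by
    push_cast; ring
  rw [e2] at h
  exact h

lemma my_sq_summable {u : 𝕋 → ℂ}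
    (hu : Summable fun k : ℤ => (1 + (k:ℝ) ^ 2) ^ (1:ℝ) * ‖fc u k‖ ^ 2) :
    Summable fun k : ℤ => ‖fc u k‖ ^ 2 := by
  refine Summable.of_nonneg_of_le (fun k => by positivity) (fun k => ?_) hu
  rw [Real.rpow_one]
  nlinarith [sq_nonneg (k:ℝ), sq_nonneg ‖fc u k‖]

lemma my_ofReal_sNormSq0 (u : 𝕋 → ℂ) (hu : Summable fun k : ℤ => ‖fc u k‖ ^ 2) :
    ENNReal.ofReal (sNormSq 0 u) = ∑' k : ℤ, ((‖fc u k‖₊ : ℝ≥0∞)) ^ 2 := by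
  have e0 : sNormSq 0 u = ∑' k : ℤ, ‖fc u k‖ ^ 2 := by
    rw [sNormSq]
    exact tsum_congr fun k => by rw [Real.rpow_zero, one_mul]
  rw [e0, ENNReal.ofReal_tsum_of_nonneg (fun k => by positivity) hu]
  refine tsum_congr fun k => ?_
  rw [ENNReal.ofReal_pow (norm_nonneg _), ofReal_norm, enorm_eq_nnnorm]

lemma my_ofReal_sNormSq1 (u : 𝕋 → ℂ)
    (hu : Summable fun k : ℤ => (1 + (k:ℝ) ^ 2) ^ (1:ℝ) * ‖fc u k‖ ^ 2) :
    ENNReal.ofReal (sNormSq 1 u) = ∑' k : ℤ, (Mw k * (‖fc u k‖₊ : ℝ≥0∞)) ^ 2 := by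
  rw [sNormSq, ENNReal.ofReal_tsum_of_nonneg (fun k => by positivity) hu]
  refine tsum_congr fun k => ?_
  rw [mul_pow, Mw, ← ENNReal.ofReal_pow (by positivity)]
  have : ((1 + (k:ℝ) ^ 2) ^ ((1:ℝ)/2)) ^ 2 = (1 + (k:ℝ) ^ 2) ^ (1:ℝ) := by
    rw [← Real.rpow_natCast ((1 + (k:ℝ)^2) ^ ((1:ℝ)/2)) 2, ← Real.rpow_mul (by positivity)]
    norm_num
  rw [this, ← enorm_eq_nnnorm, ← ofReal_norm, ← ENNReal.ofReal_pow (norm_nonneg _),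
    ← ENNReal.ofReal_mul (by positivity)]

lemma my_fc_zero (k : ℤ) : fc (fun _ : 𝕋 => (0:ℂ)) k = 0 := by
  rw [fc, fourierCoeff]
  simp

theorem stmt7 :
    ∃ C > (0:ℝ), ∀ f g : 𝕋 → ℂ, MemH 1 f → MemH 1 g →
      sNorm 0 (Jop (-1) (g * Jop 1 f)) ≤
        C * min (sNorm 0 f * sNorm 1 g) (sNorm 1 f * sNorm 0 g) := by
  refine ⟨3 * Real.sqrt Sone + 1, by positivity, ?_⟩
  intro f g hf hg
  have hC0 : (0:ℝ) ≤ 3 * Real.sqrt Sone + 1 := by positivity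
  have hmin0 : 0 ≤ min (sNorm 0 f * sNorm 1 g) (sNorm 1 f * sNorm 0 g) :=
    le_min (mul_nonneg (Real.sqrt_nonneg _) (Real.sqrt_nonneg _))
      (mul_nonneg (Real.sqrt_nonneg _) (Real.sqrt_nonneg _))
  set c : ℤ → ℂ := fun l => (((1 + (l:ℝ) ^ 2) ^ ((1:ℝ)/2) : ℝ) : ℂ) * fc f l with hcdef
  by_cases hsum : Summable fun l => ‖c l‖
  swap
  · -- degenerate case : the inner tsum diverges, so everything is 0
    have hJ : ∀ x : 𝕋, Jop 1 f x = 0 := by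
      intro x
      apply tsum_eq_zero_of_not_summable
      intro hS
      apply hsum
      have h2 := summable_norm_iff.mpr hS
      have e : ∀ k : ℤ, ‖c k * fourier k x‖ = ‖c k‖ := by
        intro k
        rw [norm_mul, my_norm_fourier, mul_one]
      exact (summable_congr e).mp h2
    have hfc0 : ∀ k : ℤ, fc (g * Jop 1 f) k = 0 := by
      intro k
      have : (g * Jop 1 f) = (fun _ : 𝕋 => (0:ℂ)) := by
        funext x
        show g x * Jop 1 f x = 0
        rw [hJ x, mul_zero]
      rw [this]
      exact my_fc_zero k
    have hX : Jop (-1) (g * Jop 1 f) = (fun _ : 𝕋 => (0:ℂ)) := by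
      funext x
      show (∑' k : ℤ, _ * fc (g * Jop 1 f) k * fourier k x) = 0
      simp [hfc0]
    have : sNorm 0 (Jop (-1) (g * Jop 1 f)) = 0 := by
      rw [sNorm, sNormSq, hX]
      simp [my_fc_zero]
    rw [this]
    exact mul_nonneg hC0 hmin0
  · -- main case
    have hg2 : MemLp g 2 μh := by
      have h1 := hg.1.smul_measure (c := (ENNReal.ofReal (2 * Real.pi))⁻¹)
        (by simp [Real.pi_pos])
      rwa [AddCircle.volume_eq_smul_haarAddCircle, smul_smul,
        ENNReal.inv_mul_cancel (ne_of_gt (ENNReal.ofReal_pos.mpr Real.two_pi_pos))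
          ENNReal.ofReal_ne_top, one_smul] at h1
    have hgInt : Integrable g μh :=
      memLp_one_iff_integrable.mp (hg2.mono_exponent (by norm_num))
    set gh : 𝕋 → ℂ := g * Jop 1 f with hghdef
    set w : ℤ → ℂ := fun k => (((1 + (k:ℝ) ^ 2) ^ ((-1:ℝ)/2) : ℝ) : ℂ) with hwdef
    set a : ℤ → ℝ≥0∞ := fun m => (‖fc g m‖₊ : ℝ≥0∞) with hadef
    set b : ℤ → ℝ≥0∞ := fun l => (‖fc f l‖₊ : ℝ≥0∞) with hbdef
    have hcb : ∀ l : ℤ, (‖c l‖₊ : ℝ≥0∞) = Mw l * b l := by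
      intro l
      rw [hcdef]
      show ((‖(((1 + (l:ℝ) ^ 2) ^ ((1:ℝ)/2) : ℝ) : ℂ) * fc f l‖₊ : ℝ≥0∞)) = _
      rw [nnnorm_mul, ENNReal.coe_mul]
      congr 1
      have hn : ‖(((1 + (l:ℝ) ^ 2) ^ ((1:ℝ)/2) : ℝ) : ℂ)‖ = (1 + (l:ℝ) ^ 2) ^ ((1:ℝ)/2) := by
        have h0 : (0:ℝ) ≤ (1 + (l:ℝ) ^ 2) ^ ((1:ℝ)/2) := by positivity
        rw [Complex.norm_real, Real.norm_eq_abs, _root_.abs_of_nonneg h0]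
      rw [← enorm_eq_nnnorm, ← ofReal_norm, hn, Mw]
    have hwW : ∀ k : ℤ, (‖w k‖₊ : ℝ≥0∞) = Ww k := by
      intro k
      rw [hwdef]
      show ((‖(((1 + (k:ℝ) ^ 2) ^ ((-1:ℝ)/2) : ℝ) : ℂ)‖₊ : ℝ≥0∞)) = _
      have hn : ‖(((1 + (k:ℝ) ^ 2) ^ ((-1:ℝ)/2) : ℝ) : ℂ)‖ = (1 + (k:ℝ) ^ 2) ^ ((-1:ℝ)/2) := by
        have h0 : (0:ℝ) ≤ (1 + (k:ℝ) ^ 2) ^ ((-1:ℝ)/2) := by positivity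
        rw [Complex.norm_real, Real.norm_eq_abs, _root_.abs_of_nonneg h0]
      rw [← enorm_eq_nnnorm, ← ofReal_norm, hn, Ww]
    -- summability of coefficient sequences
    have hf0sum : Summable fun k : ℤ => ‖fc f k‖ ^ 2 := my_sq_summable hf.2
    have hg0sum : Summable fun k : ℤ => ‖fc g k‖ ^ 2 := my_sq_summable hg.2
    have hA0 : (∑' k : ℤ, a k ^ 2) = ENNReal.ofReal (sNormSq 0 g) :=
      (my_ofReal_sNormSq0 g hg0sum).symm
    have hA1 : (∑' k : ℤ, (Mw k * a k) ^ 2) = ENNReal.ofReal (sNormSq 1 g) :=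
      (my_ofReal_sNormSq1 g hg.2).symm
    have hB0 : (∑' k : ℤ, b k ^ 2) = ENNReal.ofReal (sNormSq 0 f) :=
      (my_ofReal_sNormSq0 f hf0sum).symm
    have hB1 : (∑' k : ℤ, (Mw k * b k) ^ 2) = ENNReal.ofReal (sNormSq 1 f) :=
      (my_ofReal_sNormSq1 f hf.2).symm
    -- the convolution bound
    set u : ℤ → ℝ≥0∞ := fun k => ∑' l : ℤ, (Mw l * b l) * a (k - l) with hudef
    have hfch : ∀ k : ℤ, (‖fc gh k‖₊ : ℝ≥0∞) ≤ u k := by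
      intro k
      have e : fc gh k = ∑' l : ℤ, c l * fc g (k - l) := by
        have hfun : gh = (fun x : 𝕋 => g x * ∑' l : ℤ, c l * fourier l x) := rfl
        rw [hfun]
        exact my_fc_mul_tsum g hgInt c hsum k
      rw [e]
      calc (‖∑' l : ℤ, c l * fc g (k - l)‖₊ : ℝ≥0∞)
          ≤ ∑' l : ℤ, (‖c l * fc g (k - l)‖₊ : ℝ≥0∞) := my_ennnorm_tsum_le _
        _ = u k := by
            refine tsum_congr fun l => ?_
            rw [nnnorm_mul, ENNReal.coe_mul, hcb l]
    -- ℓ¹ bound for a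
    have haL1 : (∑' m : ℤ, a m)
        ≤ (ENNReal.ofReal Sone) ^ ((1:ℝ)/2) * (ENNReal.ofReal (sNormSq 1 g)) ^ ((1:ℝ)/2) := by
      have h := my_ecs Ww (fun m => Mw m * a m)
      have e : ∀ m : ℤ, Ww m * (Mw m * a m) = a m := by
        intro m
        rw [← mul_assoc, my_WM, one_mul]
      simp_rw [e] at h
      rwa [my_W2_sum, hA1] at h
    -- per-k bound I
    have hukI : ∀ k : ℤ, u k
        ≤ (ENNReal.ofReal (sNormSq 1 f)) ^ ((1:ℝ)/2) * (ENNReal.ofReal (sNormSq 0 g)) ^ ((1:ℝ)/2) := by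
      intro k
      have h := my_ecs (fun l => Mw l * b l) (fun l => a (k - l))
      have e2 : (∑' l : ℤ, (a (k - l)) ^ 2) = ∑' m : ℤ, a m ^ 2 :=
        my_shift_tsum (fun m => a m ^ 2) k
      rw [e2, hB1, hA0] at h
      exact h
    -- bound I total
    have hQ1 : (∑' k : ℤ, (Ww k * u k) ^ 2)
        ≤ ENNReal.ofReal Sone * (ENNReal.ofReal (sNormSq 1 f) * ENNReal.ofReal (sNormSq 0 g)) := by
      calc (∑' k : ℤ, (Ww k * u k) ^ 2)
          ≤ ∑' k : ℤ, Ww k ^ 2 *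
              ((ENNReal.ofReal (sNormSq 1 f)) ^ ((1:ℝ)/2)
                * (ENNReal.ofReal (sNormSq 0 g)) ^ ((1:ℝ)/2)) ^ 2 := by
            refine ENNReal.tsum_le_tsum fun k => ?_
            rw [mul_pow]
            exact mul_le_mul_right (pow_le_pow_left' (hukI k) 2) _
        _ = (∑' k : ℤ, Ww k ^ 2) *
              ((ENNReal.ofReal (sNormSq 1 f)) ^ ((1:ℝ)/2)
                * (ENNReal.ofReal (sNormSq 0 g)) ^ ((1:ℝ)/2)) ^ 2 := ENNReal.tsum_mul_right
        _ = ENNReal.ofReal Sone *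
              (ENNReal.ofReal (sNormSq 1 f) * ENNReal.ofReal (sNormSq 0 g)) := by
            rw [my_W2_sum, mul_pow, my_rpow_half_sq, my_rpow_half_sq]
    -- split bound II
    have hsplit : ∀ k : ℤ, Ww k * u k
        ≤ Ww k * (∑' l : ℤ, (Mw (k - l) * a (k - l)) * b l) + ∑' l : ℤ, a (k - l) * b l := by
      intro k
      have h1 : u k ≤ (∑' l : ℤ, (Mw (k - l) * a (k - l)) * b l)
          + Mw k * ∑' l : ℤ, a (k - l) * b l := by
        have h2 : u k ≤ ∑' l : ℤ, ((Mw (k - l) + Mw k) * b l) * a (k - l) := by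
          refine ENNReal.tsum_le_tsum fun l => ?_
          exact mul_le_mul_left (mul_le_mul_left (my_Mle k l) (b l)) _
        have e : ∀ l : ℤ, ((Mw (k - l) + Mw k) * b l) * a (k - l)
            = (Mw (k - l) * a (k - l)) * b l + Mw k * (a (k - l) * b l) := by
          intro l; ring
        calc u k ≤ ∑' l : ℤ, ((Mw (k - l) + Mw k) * b l) * a (k - l) := h2
          _ = (∑' l : ℤ, (Mw (k - l) * a (k - l)) * b l)
              + ∑' l : ℤ, Mw k * (a (k - l) * b l) := by
            simp_rw [e]
            exact ENNReal.tsum_add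
          _ = (∑' l : ℤ, (Mw (k - l) * a (k - l)) * b l)
              + Mw k * ∑' l : ℤ, a (k - l) * b l := by rw [ENNReal.tsum_mul_left]
      calc Ww k * u k
          ≤ Ww k * ((∑' l : ℤ, (Mw (k - l) * a (k - l)) * b l)
              + Mw k * ∑' l : ℤ, a (k - l) * b l) := mul_le_mul_right h1 _
        _ = Ww k * (∑' l : ℤ, (Mw (k - l) * a (k - l)) * b l)
            + (Ww k * Mw k) * ∑' l : ℤ, a (k - l) * b l := by ring
        _ = Ww k * (∑' l : ℤ, (Mw (k - l) * a (k - l)) * b l)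
            + ∑' l : ℤ, a (k - l) * b l := by rw [my_WM, one_mul]
    have hT1 : ∀ k : ℤ, (∑' l : ℤ, (Mw (k - l) * a (k - l)) * b l)
        ≤ (ENNReal.ofReal (sNormSq 1 g)) ^ ((1:ℝ)/2) * (ENNReal.ofReal (sNormSq 0 f)) ^ ((1:ℝ)/2) := by
      intro k
      have h := my_ecs (fun l => Mw (k - l) * a (k - l)) b
      have e2 : (∑' l : ℤ, (Mw (k - l) * a (k - l)) ^ 2) = ∑' m : ℤ, (Mw m * a m) ^ 2 :=
        my_shift_tsum (fun m => (Mw m * a m) ^ 2) k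
      rw [e2, hA1, hB0] at h
      exact h
    have haL1sq : (∑' m : ℤ, a m) ^ 2
        ≤ ENNReal.ofReal Sone * ENNReal.ofReal (sNormSq 1 g) := by
      calc (∑' m : ℤ, a m) ^ 2
          ≤ ((ENNReal.ofReal Sone) ^ ((1:ℝ)/2) * (ENNReal.ofReal (sNormSq 1 g)) ^ ((1:ℝ)/2)) ^ 2 :=
            pow_le_pow_left' haL1 2
        _ = ENNReal.ofReal Sone * ENNReal.ofReal (sNormSq 1 g) := by
            rw [mul_pow, my_rpow_half_sq, my_rpow_half_sq]
    have hT2sum : (∑' k : ℤ, (∑' l : ℤ, a (k - l) * b l) ^ 2)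
        ≤ ENNReal.ofReal Sone * (ENNReal.ofReal (sNormSq 1 g) * ENNReal.ofReal (sNormSq 0 f)) := by
      calc (∑' k : ℤ, (∑' l : ℤ, a (k - l) * b l) ^ 2)
          ≤ (∑' m : ℤ, a m) ^ 2 * ∑' l : ℤ, b l ^ 2 := my_young a b
        _ ≤ (ENNReal.ofReal Sone * ENNReal.ofReal (sNormSq 1 g)) * ∑' l : ℤ, b l ^ 2 :=
            mul_le_mul_left haL1sq _
        _ = ENNReal.ofReal Sone * (ENNReal.ofReal (sNormSq 1 g) * ENNReal.ofReal (sNormSq 0 f)) := by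
            rw [hB0, mul_assoc]
    have hQ2 : (∑' k : ℤ, (Ww k * u k) ^ 2)
        ≤ 6 * (ENNReal.ofReal Sone * (ENNReal.ofReal (sNormSq 1 g) * ENNReal.ofReal (sNormSq 0 f))) := by
      calc (∑' k : ℤ, (Ww k * u k) ^ 2)
          ≤ ∑' k : ℤ, (3 * (Ww k * (∑' l : ℤ, (Mw (k - l) * a (k - l)) * b l)) ^ 2
              + 3 * (∑' l : ℤ, a (k - l) * b l) ^ 2) := by
            refine ENNReal.tsum_le_tsum fun k => ?_
            calc (Ww k * u k) ^ 2
                ≤ (Ww k * (∑' l : ℤ, (Mw (k - l) * a (k - l)) * b l)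
                    + ∑' l : ℤ, a (k - l) * b l) ^ 2 := pow_le_pow_left' (hsplit k) 2
              _ ≤ _ := my_sq_add_le _ _
        _ = 3 * (∑' k : ℤ, (Ww k * (∑' l : ℤ, (Mw (k - l) * a (k - l)) * b l)) ^ 2)
            + 3 * (∑' k : ℤ, (∑' l : ℤ, a (k - l) * b l) ^ 2) := by
            rw [ENNReal.tsum_add, ENNReal.tsum_mul_left, ENNReal.tsum_mul_left]
        _ ≤ 3 * (ENNReal.ofReal Sone * (ENNReal.ofReal (sNormSq 1 g) * ENNReal.ofReal (sNormSq 0 f)))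
            + 3 * (ENNReal.ofReal Sone * (ENNReal.ofReal (sNormSq 1 g) * ENNReal.ofReal (sNormSq 0 f))) := by
            refine add_le_add (mul_le_mul_right ?_ 3) (mul_le_mul_right hT2sum 3)
            calc (∑' k : ℤ, (Ww k * (∑' l : ℤ, (Mw (k - l) * a (k - l)) * b l)) ^ 2)
                ≤ ∑' k : ℤ, Ww k ^ 2 *
                    ((ENNReal.ofReal (sNormSq 1 g)) ^ ((1:ℝ)/2)
                      * (ENNReal.ofReal (sNormSq 0 f)) ^ ((1:ℝ)/2)) ^ 2 := by
                  refine ENNReal.tsum_le_tsum fun k => ?_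
                  rw [mul_pow]
                  exact mul_le_mul_right (pow_le_pow_left' (hT1 k) 2) _
              _ = (∑' k : ℤ, Ww k ^ 2) *
                    ((ENNReal.ofReal (sNormSq 1 g)) ^ ((1:ℝ)/2)
                      * (ENNReal.ofReal (sNormSq 0 f)) ^ ((1:ℝ)/2)) ^ 2 := ENNReal.tsum_mul_right
              _ = ENNReal.ofReal Sone *
                    (ENNReal.ofReal (sNormSq 1 g) * ENNReal.ofReal (sNormSq 0 f)) := by
                  rw [my_W2_sum, mul_pow, my_rpow_half_sq, my_rpow_half_sq]
        _ = 6 * (ENNReal.ofReal Sone * (ENNReal.ofReal (sNormSq 1 g) * ENNReal.ofReal (sNormSq 0 f))) := by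
            ring
    -- summability of the outer coefficients
    have husq : (∑' k : ℤ, u k ^ 2)
        ≤ (ENNReal.ofReal Sone * ENNReal.ofReal (sNormSq 1 g)) * ENNReal.ofReal (sNormSq 1 f) := by
      have e : ∀ k : ℤ, u k = ∑' l : ℤ, a (k - l) * (Mw l * b l) := by
        intro k
        exact tsum_congr fun l => mul_comm _ _
      calc (∑' k : ℤ, u k ^ 2)
          = ∑' k : ℤ, (∑' l : ℤ, a (k - l) * (Mw l * b l)) ^ 2 := by
            exact tsum_congr fun k => by rw [e k]
        _ ≤ (∑' m : ℤ, a m) ^ 2 * ∑' l : ℤ, (Mw l * b l) ^ 2 := my_young a _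
        _ ≤ (ENNReal.ofReal Sone * ENNReal.ofReal (sNormSq 1 g)) * ∑' l : ℤ, (Mw l * b l) ^ 2 :=
            mul_le_mul_left haL1sq _
        _ = (ENNReal.ofReal Sone * ENNReal.ofReal (sNormSq 1 g)) * ENNReal.ofReal (sNormSq 1 f) := by
            rw [hB1]
    have hWu : (∑' k : ℤ, Ww k * u k) ≠ ⊤ := by
      have h := my_ecs Ww u
      rw [my_W2_sum] at h
      refine ne_top_of_le_ne_top ?_ h
      refine ENNReal.mul_ne_top ?_ ?_
      · exact ENNReal.rpow_ne_top_of_nonneg (by norm_num) ENNReal.ofReal_ne_top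
      · refine ENNReal.rpow_ne_top_of_nonneg (by norm_num) ?_
        refine ne_top_of_le_ne_top ?_ husq
        exact ENNReal.mul_ne_top (ENNReal.mul_ne_top ENNReal.ofReal_ne_top ENNReal.ofReal_ne_top)
          ENNReal.ofReal_ne_top
    have hD : Summable fun k : ℤ => ‖w k * fc gh k‖ := by
      have h1 : (∑' k : ℤ, ((‖w k * fc gh k‖₊ : ℝ≥0) : ℝ≥0∞)) ≠ ⊤ := by
        refine ne_top_of_le_ne_top hWu (ENNReal.tsum_le_tsum fun k => ?_)
        rw [nnnorm_mul, ENNReal.coe_mul, hwW]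
        exact mul_le_mul_right (hfch k) _
      have h2 := ENNReal.tsum_coe_ne_top_iff_summable.mp h1
      have h3 := NNReal.summable_coe.mpr h2
      simpa [coe_nnnorm] using h3
    have hfcX : ∀ k : ℤ, fc (Jop (-1) gh) k = w k * fc gh k := by
      intro k
      have hfun : Jop (-1) gh = (fun x : 𝕋 => ∑' l : ℤ, (w l * fc gh l) * fourier l x) := rfl
      rw [hfun]
      exact my_fc_tsum _ hD k
    set Q : ℤ → ℝ≥0∞ := fun k => ((‖w k * fc gh k‖₊ : ℝ≥0∞)) ^ 2 with hQdef
    have hQle : ∀ k : ℤ, Q k ≤ (Ww k * u k) ^ 2 := by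
      intro k
      refine pow_le_pow_left' ?_ 2
      rw [nnnorm_mul, ENNReal.coe_mul, hwW]
      exact mul_le_mul_right (hfch k) _
    have hQsum1 : (∑' k : ℤ, Q k)
        ≤ ENNReal.ofReal Sone * (ENNReal.ofReal (sNormSq 1 f) * ENNReal.ofReal (sNormSq 0 g)) :=
      le_trans (ENNReal.tsum_le_tsum hQle) hQ1
    have hQsum2 : (∑' k : ℤ, Q k)
        ≤ 6 * (ENNReal.ofReal Sone * (ENNReal.ofReal (sNormSq 1 g) * ENNReal.ofReal (sNormSq 0 f))) :=
      le_trans (ENNReal.tsum_le_tsum hQle) hQ2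
    have hnn : ∀ (α : ℝ) (v : 𝕋 → ℂ), 0 ≤ sNormSq α v := fun α v =>
      tsum_nonneg fun k => by positivity
    have hsn : sNormSq 0 (Jop (-1) gh) = (∑' k : ℤ, Q k).toReal := by
      rw [ENNReal.tsum_toReal_eq (fun k => ENNReal.pow_ne_top ENNReal.coe_ne_top)]
      rw [sNormSq]
      refine tsum_congr fun k => ?_
      rw [Real.rpow_zero, one_mul, hfcX k]
      show ‖w k * fc gh k‖ ^ 2 = (((‖w k * fc gh k‖₊ : ℝ≥0∞)) ^ 2).toReal
      rw [← ENNReal.coe_pow, ENNReal.coe_toReal]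
      push_cast
      rfl
    have real1 : sNormSq 0 (Jop (-1) gh) ≤ Sone * (sNormSq 1 f * sNormSq 0 g) := by
      rw [hsn]
      have h := ENNReal.toReal_mono (ENNReal.mul_ne_top ENNReal.ofReal_ne_top
        (ENNReal.mul_ne_top ENNReal.ofReal_ne_top ENNReal.ofReal_ne_top)) hQsum1
      rwa [ENNReal.toReal_mul, ENNReal.toReal_mul, ENNReal.toReal_ofReal my_Sone_nonneg,
        ENNReal.toReal_ofReal (hnn 1 f), ENNReal.toReal_ofReal (hnn 0 g)] at h
    have real2 : sNormSq 0 (Jop (-1) gh) ≤ 6 * (Sone * (sNormSq 1 g * sNormSq 0 f)) := by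
      rw [hsn]
      have h := ENNReal.toReal_mono (ENNReal.mul_ne_top (by norm_num)
        (ENNReal.mul_ne_top ENNReal.ofReal_ne_top
          (ENNReal.mul_ne_top ENNReal.ofReal_ne_top ENNReal.ofReal_ne_top))) hQsum2
      rwa [ENNReal.toReal_mul, ENNReal.toReal_mul, ENNReal.toReal_mul,
        ENNReal.toReal_ofReal my_Sone_nonneg, ENNReal.toReal_ofReal (hnn 1 g),
        ENNReal.toReal_ofReal (hnn 0 f), ENNReal.toReal_ofNat] at h
    have s1 : sNorm 0 (Jop (-1) gh) ≤ Real.sqrt Sone * (sNorm 1 f * sNorm 0 g) := by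
      rw [sNorm, sNorm, sNorm]
      calc Real.sqrt (sNormSq 0 (Jop (-1) gh))
          ≤ Real.sqrt (Sone * (sNormSq 1 f * sNormSq 0 g)) := Real.sqrt_le_sqrt real1
        _ = Real.sqrt Sone * (Real.sqrt (sNormSq 1 f) * Real.sqrt (sNormSq 0 g)) := by
            rw [Real.sqrt_mul my_Sone_nonneg, Real.sqrt_mul (hnn 1 f)]
    have hsqrt6 : Real.sqrt 6 ≤ 3 := by
      have h9 : (3:ℝ) = Real.sqrt 9 := by
        rw [show (9:ℝ) = 3 ^ 2 by norm_num, Real.sqrt_sq (by norm_num)]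
      rw [h9]
      exact Real.sqrt_le_sqrt (by norm_num)
    have s2 : sNorm 0 (Jop (-1) gh) ≤ 3 * Real.sqrt Sone * (sNorm 1 g * sNorm 0 f) := by
      rw [sNorm, sNorm, sNorm]
      calc Real.sqrt (sNormSq 0 (Jop (-1) gh))
          ≤ Real.sqrt (6 * (Sone * (sNormSq 1 g * sNormSq 0 f))) := Real.sqrt_le_sqrt real2
        _ = Real.sqrt 6 * (Real.sqrt Sone * (Real.sqrt (sNormSq 1 g) * Real.sqrt (sNormSq 0 f))) := by
            rw [Real.sqrt_mul (by norm_num), Real.sqrt_mul my_Sone_nonneg,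
              Real.sqrt_mul (hnn 1 g)]
        _ ≤ 3 * (Real.sqrt Sone * (Real.sqrt (sNormSq 1 g) * Real.sqrt (sNormSq 0 f))) := by
            refine mul_le_mul_of_nonneg_right hsqrt6 (by positivity)
        _ = 3 * Real.sqrt Sone * (Real.sqrt (sNormSq 1 g) * Real.sqrt (sNormSq 0 f)) := by ring
    rcases le_total (sNorm 0 f * sNorm 1 g) (sNorm 1 f * sNorm 0 g) with hm | hm
    · rw [min_eq_left hm]
      calc sNorm 0 (Jop (-1) gh) ≤ 3 * Real.sqrt Sone * (sNorm 1 g * sNorm 0 f) := s2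
        _ = 3 * Real.sqrt Sone * (sNorm 0 f * sNorm 1 g) := by ring
        _ ≤ (3 * Real.sqrt Sone + 1) * (sNorm 0 f * sNorm 1 g) := by
            refine mul_le_mul_of_nonneg_right (by nlinarith [Real.sqrt_nonneg Sone])
              (mul_nonneg (Real.sqrt_nonneg _) (Real.sqrt_nonneg _))
    · rw [min_eq_right hm]
      calc sNorm 0 (Jop (-1) gh) ≤ Real.sqrt Sone * (sNorm 1 f * sNorm 0 g) := s1
        _ ≤ (3 * Real.sqrt Sone + 1) * (sNorm 1 f * sNorm 0 g) := by
            refine mul_le_mul_of_nonneg_right (by nlinarith [Real.sqrt_nonneg Sone])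
              (mul_nonneg (Real.sqrt_nonneg _) (Real.sqrt_nonneg _))
end
end

section
/- Let r ≥ 1. There exists a constant C = C(r) > 0 such that for all f, g ∈ H^r(𝕋): ‖ |∂ₓ|^{−2} [ (|∂ₓ| g) · (|∂ₓ| f) ] ‖_r ≤ C ‖f‖_r ‖g‖_r. -/
open MeasureTheory Complex

noncomputable section

local notation "𝕋" => AddCircle (2 * Real.pi)

/-! ### Auxiliary lemmas for `stmt9` -/

section Stmt9Aux

open scoped Real

lemma stmt9_norm_fourier (k : ℤ) (x : 𝕋) : ‖(fourier k x : ℂ)‖ = 1 := by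
  rw [fourier_apply]
  exact Circle.norm_coe _

lemma stmt9_integral_fourier (k : ℤ) :
    ∫ x : 𝕋, fourier k x ∂AddCircle.haarAddCircle = if k = 0 then 1 else 0 := by
  split_ifs with h
  · subst h
    rw [show (fun x : 𝕋 => (fourier 0 x : ℂ)) = fun _ => (1 : ℂ) from funext fun x => fourier_zero]
    simp
  · exact MeasureTheory.integral_eq_zero_of_add_right_eq_neg
      (fourier_add_half_inv_index h (by positivity))

lemma stmt9_fc_tsum {e : ℤ → ℂ} (he : Summable fun k => ‖e k‖) (j : ℤ) :
    fc (fun x : 𝕋 => ∑' k, e k * fourier k x) j = e j := by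
  have hnn : Summable fun k => ‖e k‖₊ := by
    rw [← NNReal.summable_coe]; simpa using he
  have key : (fun x : 𝕋 => (fourier (-j) x : ℂ) • ∑' k, e k * fourier k x)
      = fun x : 𝕋 => ∑' k, e k * fourier (k + -j) x := by
    funext x
    rw [smul_eq_mul, ← tsum_mul_left]
    exact tsum_congr fun k => by rw [fourier_add]; ring
  have hmeas : ∀ k : ℤ, MeasureTheory.AEStronglyMeasurable
      (fun x : 𝕋 => e k * fourier (k + -j) x) AddCircle.haarAddCircle := fun k =>
    (continuous_const.mul (map_continuous (fourier (k + -j)))).aestronglyMeasurable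
  have hlin : ∑' k : ℤ, ∫⁻ x : 𝕋, ‖e k * fourier (k + -j) x‖₊ ∂AddCircle.haarAddCircle ≠ ⊤ := by
    have hint : ∀ k : ℤ, ∫⁻ x : 𝕋, ‖e k * fourier (k + -j) x‖₊ ∂AddCircle.haarAddCircle
        = (‖e k‖₊ : ENNReal) := by
      intro k
      have h2 : ∀ x : 𝕋, (‖e k * fourier (k + -j) x‖₊ : ENNReal) = (‖e k‖₊ : ENNReal) := by
        intro x
        have h3 : ‖(fourier (k + -j) x : ℂ)‖₊ = 1 :=
          NNReal.coe_injective (by simp only [coe_nnnorm, stmt9_norm_fourier, NNReal.coe_one])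
        rw [nnnorm_mul, h3, mul_one]
      simp only [h2]
      rw [MeasureTheory.lintegral_const, measure_univ, mul_one]
    simp only [hint]
    exact ENNReal.tsum_coe_ne_top_iff_summable.2 hnn
  unfold fc fourierCoeff
  rw [key, MeasureTheory.integral_tsum hmeas hlin]
  rw [tsum_eq_single j, MeasureTheory.integral_const_mul, stmt9_integral_fourier]
  · simp
  · intro k hk
    rw [MeasureTheory.integral_const_mul, stmt9_integral_fourier, if_neg (by omega), mul_zero]

lemma stmt9_fc_zero (k : ℤ) : fc (fun _ : 𝕋 => (0 : ℂ)) k = 0 := by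
  unfold fc fourierCoeff
  simp

lemma stmt9_summable_mul_of_sq {a b : ℤ → ℝ} (ha : ∀ k, 0 ≤ a k) (hb : ∀ k, 0 ≤ b k)
    (ha2 : Summable fun k => a k ^ 2) (hb2 : Summable fun k => b k ^ 2) :
    Summable fun k => a k * b k :=
  Summable.of_nonneg_of_le (fun k => mul_nonneg (ha k) (hb k))
    (fun k => by nlinarith [sq_nonneg (a k - b k)])
    ((ha2.add hb2).div_const 2)

lemma stmt9_tsum_cauchy_schwarz {a b : ℤ → ℝ} (ha : ∀ k, 0 ≤ a k) (hb : ∀ k, 0 ≤ b k)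
    (ha2 : Summable fun k => a k ^ 2) (hb2 : Summable fun k => b k ^ 2) :
    ∑' k, a k * b k ≤ Real.sqrt (∑' k, a k ^ 2) * Real.sqrt (∑' k, b k ^ 2) := by
  refine Summable.tsum_le_of_sum_le (stmt9_summable_mul_of_sq ha hb ha2 hb2) fun s => ?_
  have h1 : (∑ i ∈ s, a i * b i) ^ 2 ≤ (∑ i ∈ s, a i ^ 2) * ∑ i ∈ s, b i ^ 2 :=
    Finset.sum_mul_sq_le_sq_mul_sq s a b
  have h2 : ∑ i ∈ s, a i ^ 2 ≤ ∑' k, a k ^ 2 := Summable.sum_le_tsum s (fun i _ => sq_nonneg _) ha2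
  have h3 : ∑ i ∈ s, b i ^ 2 ≤ ∑' k, b k ^ 2 := Summable.sum_le_tsum s (fun i _ => sq_nonneg _) hb2
  have h0 : 0 ≤ ∑ i ∈ s, a i * b i := Finset.sum_nonneg fun i _ => mul_nonneg (ha i) (hb i)
  have h4 : 0 ≤ ∑ i ∈ s, a i ^ 2 := Finset.sum_nonneg fun i _ => sq_nonneg _
  have h5 : 0 ≤ ∑ i ∈ s, b i ^ 2 := Finset.sum_nonneg fun i _ => sq_nonneg _
  calc ∑ i ∈ s, a i * b i = Real.sqrt ((∑ i ∈ s, a i * b i) ^ 2) := (Real.sqrt_sq h0).symm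
    _ ≤ Real.sqrt ((∑' k, a k ^ 2) * ∑' k, b k ^ 2) := by
        apply Real.sqrt_le_sqrt
        calc (∑ i ∈ s, a i * b i) ^ 2 ≤ (∑ i ∈ s, a i ^ 2) * ∑ i ∈ s, b i ^ 2 := h1
          _ ≤ (∑' k, a k ^ 2) * ∑' k, b k ^ 2 := by
              apply mul_le_mul h2 h3 h5 (le_trans h4 h2)
    _ = Real.sqrt (∑' k, a k ^ 2) * Real.sqrt (∑' k, b k ^ 2) :=
        Real.sqrt_mul (le_trans h4 h2) _

lemma stmt9_sq_rpow {y : ℝ} (hy : 0 ≤ y) : y ≤ (1 + y ^ 2) ^ (1/2 : ℝ) := by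
  have h1 : y = (y ^ 2) ^ (1/2 : ℝ) := by
    rw [← Real.rpow_natCast y 2, ← Real.rpow_mul hy]
    norm_num
  rw [h1]
  exact Real.rpow_le_rpow (by positivity) (by nlinarith) (by norm_num)

lemma stmt9_kernel_aux {r x y z : ℝ} (hr : 1 ≤ r) (hx : 1 ≤ x) (hy : 0 ≤ y) (hz : 0 ≤ z)
    (hxyz : x ≤ y + z) (hzy : z ≤ y) :
    (1 + x ^ 2) ^ (r / 2) * (x ^ 2)⁻¹ * (y * z)
      ≤ 2 ^ (r / 2) * 2 ^ (r - 1) / x * ((1 + y ^ 2) ^ (r / 2) * (1 + z ^ 2) ^ (r / 2)) := by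
  have hx0 : (0 : ℝ) < x := by linarith
  have hy0 : (0 : ℝ) < y := by nlinarith
  have h1 : (1 + x ^ 2) ^ (r / 2) ≤ 2 ^ (r / 2) * x ^ r := by
    have e1 : (1 : ℝ) + x ^ 2 ≤ 2 * x ^ 2 := by nlinarith
    have e2 := Real.rpow_le_rpow (by positivity) e1 (by linarith : (0:ℝ) ≤ r / 2)
    have e3 : ((2:ℝ) * x ^ 2) ^ (r / 2) = 2 ^ (r / 2) * x ^ r := by
      rw [Real.mul_rpow (by norm_num) (by positivity)]
      congr 1
      rw [← Real.rpow_natCast x 2, ← Real.rpow_mul hx0.le,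
        show ((2:ℕ) : ℝ) * (r / 2) = r by push_cast; ring]
    rwa [e3] at e2
  have hyr : y ^ (r - 1) ≤ ((1 + y ^ 2) ^ (1/2 : ℝ)) ^ (r - 1) :=
    Real.rpow_le_rpow hy (stmt9_sq_rpow hy) (by linarith)
  have h2 : x ^ (r - 1) ≤ 2 ^ (r - 1) * (1 + y ^ 2) ^ ((r - 1) / 2) := by
    calc x ^ (r - 1) ≤ (2 * y) ^ (r - 1) :=
          Real.rpow_le_rpow hx0.le (by linarith) (by linarith)
      _ = 2 ^ (r - 1) * y ^ (r - 1) := Real.mul_rpow (by norm_num) hy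
      _ ≤ 2 ^ (r - 1) * ((1 + y ^ 2) ^ (1/2 : ℝ)) ^ (r - 1) := by
          exact mul_le_mul_of_nonneg_left hyr (by positivity)
      _ = 2 ^ (r - 1) * (1 + y ^ 2) ^ ((r - 1) / 2) := by
          rw [← Real.rpow_mul (by positivity)]
          congr 1
          ring
  have h5 : z ≤ (1 + z ^ 2) ^ (r / 2) := by
    calc z ≤ (1 + z ^ 2) ^ (1/2 : ℝ) := stmt9_sq_rpow hz
      _ ≤ (1 + z ^ 2) ^ (r / 2) :=
          Real.rpow_le_rpow_of_exponent_le (by nlinarith) (by linarith)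
  have h4 : y ≤ (1 + y ^ 2) ^ (1/2 : ℝ) := stmt9_sq_rpow hy
  have hcore : x ^ (r - 1) * y * z
      ≤ 2 ^ (r - 1) * ((1 + y ^ 2) ^ (r / 2) * (1 + z ^ 2) ^ (r / 2)) := by
    have hmerge : (1 + y ^ 2) ^ ((r - 1) / 2) * (1 + y ^ 2) ^ (1/2 : ℝ)
        = (1 + y ^ 2) ^ (r / 2) := by
      rw [← Real.rpow_add (by positivity)]
      congr 1
      ring
    calc x ^ (r - 1) * y * z
        ≤ (2 ^ (r - 1) * (1 + y ^ 2) ^ ((r - 1) / 2)) * ((1 + y ^ 2) ^ (1/2 : ℝ))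
            * ((1 + z ^ 2) ^ (r / 2)) := by
          apply mul_le_mul
          · exact mul_le_mul h2 h4 hy (by positivity)
          · exact h5
          · exact hz
          · positivity
      _ = 2 ^ (r - 1) * ((1 + y ^ 2) ^ (r / 2) * (1 + z ^ 2) ^ (r / 2)) := by
          rw [mul_assoc (2 ^ (r - 1)), hmerge, mul_assoc]
  have hxr : x ^ r = x ^ (r - 1) * x := by
    have h6 := Real.rpow_add hx0 (r - 1) 1
    rw [Real.rpow_one] at h6
    rw [← h6]
    congr 1
    ring
  calc (1 + x ^ 2) ^ (r / 2) * (x ^ 2)⁻¹ * (y * z)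
      ≤ (2 ^ (r / 2) * x ^ r) * (x ^ 2)⁻¹ * (y * z) := by
        apply mul_le_mul_of_nonneg_right (mul_le_mul_of_nonneg_right h1 (by positivity))
          (by positivity)
    _ = 2 ^ (r / 2) * (x ^ (r - 1) * y * z) / x := by
        rw [hxr]; field_simp
    _ ≤ 2 ^ (r / 2) * (2 ^ (r - 1) * ((1 + y ^ 2) ^ (r / 2) * (1 + z ^ 2) ^ (r / 2))) / x := by
        gcongr
    _ = 2 ^ (r / 2) * 2 ^ (r - 1) / x * ((1 + y ^ 2) ^ (r / 2) * (1 + z ^ 2) ^ (r / 2)) := by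
        ring

lemma stmt9_kernel {r x y z : ℝ} (hr : 1 ≤ r) (hx : 1 ≤ x) (hy : 0 ≤ y) (hz : 0 ≤ z)
    (hxyz : x ≤ y + z) :
    (1 + x ^ 2) ^ (r / 2) * (x ^ 2)⁻¹ * (y * z)
      ≤ 2 ^ (r / 2) * 2 ^ (r - 1) / x * ((1 + y ^ 2) ^ (r / 2) * (1 + z ^ 2) ^ (r / 2)) := by
  rcases le_total z y with h | h
  · exact stmt9_kernel_aux hr hx hy hz hxyz h
  · have h' := stmt9_kernel_aux hr hx hz hy (by linarith) h
    rw [mul_comm y z, mul_comm ((1 + y ^ 2) ^ (r / 2)) ((1 + z ^ 2) ^ (r / 2))]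
    exact h'

def stmt9Equiv : ℤ × ℤ ≃ ℤ × ℤ where
  toFun q := (q.2, q.1 - q.2)
  invFun z := (z.1 + z.2, z.1)
  left_inv := by rintro ⟨a, b⟩; simp
  right_inv := by rintro ⟨a, b⟩; simp

end Stmt9Aux

lemma stmt9_absD_apply (α : ℝ) (h : 𝕋 → ℂ) (x : 𝕋) :
    absD α h x
      = ∑' k : ℤ, (if k = 0 then 0 else ((|(k : ℝ)| ^ α : ℝ) : ℂ)) * fc h k * fourier k x := rfl

set_option maxHeartbeats 2000000 in
theorem stmt9 (r : ℝ) (hr : 1 ≤ r) :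
    ∃ C > (0:ℝ), ∀ f g : 𝕋 → ℂ, MemH r f → MemH r g →
      sNorm r (absD (-2) ((absD 1 g) * (absD 1 f))) ≤ C * sNorm r f * sNorm r g := by
  have hS₂sum : Summable fun k : ℤ => 1 / (k : ℝ) ^ 2 :=
    Real.summable_one_div_int_pow.2 one_lt_two
  set C₀ : ℝ := 2 ^ (r / 2) * 2 ^ (r - 1) with hC₀
  have hC₀pos : 0 < C₀ := by positivity
  set S₂ : ℝ := ∑' k : ℤ, 1 / (k : ℝ) ^ 2 with hS₂
  have hS₂nonneg : 0 ≤ S₂ := tsum_nonneg fun k => by positivity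
  refine ⟨C₀ * Real.sqrt S₂ + 1, by positivity, ?_⟩
  intro f g hf hg
  set c : ℤ → ℂ := fun k => (if k = 0 then 0 else ((|(k : ℝ)| : ℝ) : ℂ)) * fc g k with hc_def
  set d : ℤ → ℂ := fun k => (if k = 0 then 0 else ((|(k : ℝ)| : ℝ) : ℂ)) * fc f k with hd_def
  have hug : absD 1 g = fun x : 𝕋 => ∑' k : ℤ, c k * fourier k x := by
    funext x
    rw [stmt9_absD_apply]
    exact tsum_congr fun k => by rw [Real.rpow_one]
  have huf : absD 1 f = fun x : 𝕋 => ∑' k : ℤ, d k * fourier k x := by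
    funext x
    rw [stmt9_absD_apply]
    exact tsum_congr fun k => by rw [Real.rpow_one]
  have hnc : ∀ k : ℤ, ‖c k‖ ≤ |(k : ℝ)| * ‖fc g k‖ := by
    intro k
    by_cases h : k = 0
    · simp [hc_def, h]
    · simp [hc_def, h, norm_mul, Complex.norm_real, Real.norm_eq_abs, _root_.abs_abs, le_refl]
  have hnd : ∀ k : ℤ, ‖d k‖ ≤ |(k : ℝ)| * ‖fc f k‖ := by
    intro k
    by_cases h : k = 0
    · simp [hd_def, h]
    · simp [hd_def, h, norm_mul, Complex.norm_real, Real.norm_eq_abs, _root_.abs_abs, le_refl]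
  -- zero case helper
  have hzero : (absD 1 g) * (absD 1 f) = (fun _ : 𝕋 => (0:ℂ)) →
      sNorm r (absD (-2) ((absD 1 g) * (absD 1 f)))
        ≤ (C₀ * Real.sqrt S₂ + 1) * sNorm r f * sNorm r g := by
    intro habs
    have h1 : absD (-2) ((absD 1 g) * (absD 1 f)) = fun _ : 𝕋 => (0:ℂ) := by
      rw [habs]
      funext x
      rw [stmt9_absD_apply]
      simp [stmt9_fc_zero]
    have h2 : sNorm r (absD (-2) ((absD 1 g) * (absD 1 f))) = 0 := by
      rw [h1]
      unfold sNorm sNormSq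
      simp [stmt9_fc_zero]
    rw [h2]
    have h3 : 0 ≤ sNorm r f := Real.sqrt_nonneg _
    have h4 : 0 ≤ sNorm r g := Real.sqrt_nonneg _
    have h5 : 0 ≤ C₀ * Real.sqrt S₂ + 1 := by positivity
    exact mul_nonneg (mul_nonneg h5 h3) h4
  by_cases hcs : Summable fun k : ℤ => ‖c k‖
  case neg =>
    apply hzero
    have hgz : absD 1 g = fun _ : 𝕋 => (0:ℂ) := by
      rw [hug]
      funext x
      apply tsum_eq_zero_of_not_summable
      intro hsx
      exact hcs ((summable_norm_iff.mpr hsx).congr fun k => by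
        rw [norm_mul, stmt9_norm_fourier, mul_one])
    funext x
    rw [Pi.mul_apply, hgz]
    simp
  by_cases hds : Summable fun k : ℤ => ‖d k‖
  case neg =>
    apply hzero
    have hfz : absD 1 f = fun _ : 𝕋 => (0:ℂ) := by
      rw [huf]
      funext x
      apply tsum_eq_zero_of_not_summable
      intro hsx
      exact hds ((summable_norm_iff.mpr hsx).congr fun k => by
        rw [norm_mul, stmt9_norm_fourier, mul_one])
    funext x
    rw [Pi.mul_apply, hfz]
    simp
  -- main case
  set e : ℤ → ℂ := fun j => ∑' p : ℤ, c p * d (j - p) with he_def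
  have Hn : Summable fun z : ℤ × ℤ => ‖c z.1‖ * ‖d z.2‖ :=
    hcs.mul_of_nonneg hds (fun _ => norm_nonneg _) (fun _ => norm_nonneg _)
  have Hσ : Summable fun q : ℤ × ℤ => ‖c q.2‖ * ‖d (q.1 - q.2)‖ :=
    (Hn.comp_injective stmt9Equiv.injective).congr fun q => rfl
  have hfib : ∀ k : ℤ, Summable fun p : ℤ => ‖c p‖ * ‖d (k - p)‖ := by
    intro k
    have hinj : Function.Injective fun p : ℤ => ((p, k - p) : ℤ × ℤ) :=
      fun p q h => by simpa using congrArg Prod.fst h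
    exact (Hn.comp_injective hinj).congr fun p => rfl
  have hfib' : ∀ k : ℤ, Summable fun p : ℤ => ‖c p * d (k - p)‖ := fun k =>
    (hfib k).congr fun p => (norm_mul _ _).symm
  have hE : ∀ j : ℤ, ‖e j‖ ≤ ∑' p : ℤ, ‖c p‖ * ‖d (j - p)‖ := by
    intro j
    calc ‖e j‖ ≤ ∑' p : ℤ, ‖c p * d (j - p)‖ := norm_tsum_le_tsum_norm (hfib' j)
      _ = ∑' p : ℤ, ‖c p‖ * ‖d (j - p)‖ := tsum_congr fun p => norm_mul _ _
  have hEbsum : Summable fun j : ℤ => ∑' p : ℤ, ‖c p‖ * ‖d (j - p)‖ :=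
    ((summable_prod_of_nonneg fun q => mul_nonneg (norm_nonneg _) (norm_nonneg _)).1 Hσ).2
  have he_norm : Summable fun j : ℤ => ‖e j‖ :=
    Summable.of_nonneg_of_le (fun j => norm_nonneg _) hE hEbsum
  -- product identity
  have hUV : (absD 1 g) * (absD 1 f) = fun x : 𝕋 => ∑' j : ℤ, e j * fourier j x := by
    funext x
    have hcx : Summable fun k : ℤ => ‖c k * fourier k x‖ :=
      hcs.congr fun k => by conv_rhs => rw [norm_mul, stmt9_norm_fourier, mul_one]
    have hdx : Summable fun k : ℤ => ‖d k * fourier k x‖ :=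
      hds.congr fun k => by conv_rhs => rw [norm_mul, stmt9_norm_fourier, mul_one]
    have hfmul : ∀ i j' : ℤ, (fourier j' x : ℂ) * fourier (i - j') x = fourier i x := by
      intro i j'
      have h : j' + (i - j') = i := by ring
      conv_rhs => rw [← h]
      rw [fourier_add]
    rw [Pi.mul_apply, hug, huf]
    show (∑' k : ℤ, c k * fourier k x) * (∑' k : ℤ, d k * fourier k x)
      = ∑' j : ℤ, e j * fourier j x
    rw [tsum_mul_tsum_of_summable_norm (f := fun k : ℤ => c k * fourier k x)
      (g := fun k : ℤ => d k * fourier k x) hcx hdx]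
    have hFsum : Summable fun z : ℤ × ℤ => (c z.1 * fourier z.1 x) * (d z.2 * fourier z.2 x) :=
      summable_mul_of_summable_norm (f := fun k : ℤ => c k * fourier k x)
        (g := fun k : ℤ => d k * fourier k x) hcx hdx
    have hptwise : ∀ q : ℤ × ℤ,
        (c q.2 * fourier q.2 x) * (d (q.1 - q.2) * fourier (q.1 - q.2) x)
          = (c q.2 * d (q.1 - q.2)) * fourier q.1 x := fun q => by
      rw [← hfmul q.1 q.2]; ring
    have hGsum : Summable fun q : ℤ × ℤ => (c q.2 * d (q.1 - q.2)) * fourier q.1 x :=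
      (hFsum.comp_injective stmt9Equiv.injective).congr hptwise
    calc (∑' z : ℤ × ℤ, (c z.1 * fourier z.1 x) * (d z.2 * fourier z.2 x))
        = ∑' q : ℤ × ℤ, (c (stmt9Equiv q).1 * fourier (stmt9Equiv q).1 x)
            * (d (stmt9Equiv q).2 * fourier (stmt9Equiv q).2 x) :=
          (stmt9Equiv.tsum_eq _).symm
      _ = ∑' q : ℤ × ℤ, (c q.2 * d (q.1 - q.2)) * fourier q.1 x := tsum_congr hptwise
      _ = ∑' j : ℤ, ∑' p : ℤ, (c p * d (j - p)) * fourier j x := Summable.tsum_prod hGsum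
      _ = ∑' j : ℤ, e j * fourier j x := tsum_congr fun j => by
            simp only [he_def]; exact tsum_mul_right
  set w : ℤ → ℂ := fun k => (if k = 0 then 0 else ((|(k : ℝ)| ^ (-2 : ℝ) : ℝ) : ℂ)) * e k
    with hw_def
  have hfcUV : ∀ j : ℤ, fc ((absD 1 g) * (absD 1 f)) j = e j := by
    intro j
    rw [hUV]
    exact stmt9_fc_tsum he_norm j
  have hW : absD (-2) ((absD 1 g) * (absD 1 f)) = fun x : 𝕋 => ∑' k : ℤ, w k * fourier k x := by
    funext x
    rw [stmt9_absD_apply]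
    exact tsum_congr fun k => by rw [hfcUV k]
  have hrpow2 : ∀ k : ℤ, k ≠ 0 → (|(k : ℝ)| ^ (-2 : ℝ) : ℝ) = ((k : ℝ) ^ 2)⁻¹ := by
    intro k hk
    rw [Real.rpow_neg (abs_nonneg _)]
    congr 1
    rw [show ((2:ℝ)) = ((2:ℕ) : ℝ) by norm_num, Real.rpow_natCast, _root_.sq_abs]
  have hwnorm : ∀ k : ℤ, k ≠ 0 → ‖w k‖ = ((k : ℝ) ^ 2)⁻¹ * ‖e k‖ := by
    intro k hk
    simp only [hw_def]
    rw [if_neg hk, norm_mul, hrpow2 k hk]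
    congr 1
    rw [Complex.norm_real, Real.norm_eq_abs]
    exact abs_of_nonneg (by positivity)
  have hMd : ∀ q : ℤ, ‖d q‖ ≤ ∑' k : ℤ, ‖d k‖ := fun q =>
    Summable.le_tsum hds q fun _ _ => norm_nonneg _
  have hEb_bound : ∀ j : ℤ, (∑' p : ℤ, ‖c p‖ * ‖d (j - p)‖)
      ≤ (∑' k : ℤ, ‖c k‖) * (∑' k : ℤ, ‖d k‖) := by
    intro j
    calc (∑' p : ℤ, ‖c p‖ * ‖d (j - p)‖) ≤ ∑' p : ℤ, ‖c p‖ * (∑' k : ℤ, ‖d k‖) :=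
          Summable.tsum_le_tsum (fun p => mul_le_mul_of_nonneg_left (hMd (j - p)) (norm_nonneg _))
            (hfib j) (hcs.mul_right _)
      _ = (∑' k : ℤ, ‖c k‖) * (∑' k : ℤ, ‖d k‖) := tsum_mul_right
  have hw_norm : Summable fun k : ℤ => ‖w k‖ := by
    refine Summable.of_nonneg_of_le (fun k => norm_nonneg _) ?_
      (hS₂sum.mul_right ((∑' k : ℤ, ‖c k‖) * (∑' k : ℤ, ‖d k‖)))
    intro k
    by_cases hk : k = 0
    · subst hk
      simp [hw_def]
    · rw [hwnorm k hk, one_div]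
      apply mul_le_mul ?_ ((hE k).trans (hEb_bound k)) (norm_nonneg _) (by positivity)
      exact le_refl _
  -- weights
  set P : ℤ → ℝ := fun k => (1 + (k : ℝ) ^ 2) ^ (r / 2) with hP_def
  have hPpos : ∀ k : ℤ, 0 < P k := fun k => by simp only [hP_def]; positivity
  have hP2 : ∀ k : ℤ, P k ^ 2 = (1 + (k : ℝ) ^ 2) ^ r := by
    intro k
    simp only [hP_def]
    rw [← Real.rpow_natCast ((1 + (k : ℝ) ^ 2) ^ (r / 2)) 2, ← Real.rpow_mul (by positivity)]
    norm_num
  set a : ℤ → ℝ := fun k => P k * ‖fc g k‖ with ha_def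
  set b : ℤ → ℝ := fun k => P k * ‖fc f k‖ with hb_def
  have ha_nonneg : ∀ k : ℤ, 0 ≤ a k := fun k => by
    simp only [ha_def]; exact mul_nonneg (hPpos k).le (norm_nonneg _)
  have hb_nonneg : ∀ k : ℤ, 0 ≤ b k := fun k => by
    simp only [hb_def]; exact mul_nonneg (hPpos k).le (norm_nonneg _)
  have ha2 : Summable fun k : ℤ => a k ^ 2 :=
    hg.2.congr fun k => by simp only [ha_def]; rw [mul_pow, hP2 k]
  have hb2 : Summable fun k : ℤ => b k ^ 2 :=
    hf.2.congr fun k => by simp only [hb_def]; rw [mul_pow, hP2 k]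
  have hSa : sNormSq r g = ∑' k : ℤ, a k ^ 2 := by
    unfold sNormSq
    exact tsum_congr fun k => by simp only [ha_def]; rw [mul_pow, hP2 k]
  have hSf : sNormSq r f = ∑' k : ℤ, b k ^ 2 := by
    unfold sNormSq
    exact tsum_congr fun k => by simp only [hb_def]; rw [mul_pow, hP2 k]
  have hSa0 : 0 ≤ ∑' k : ℤ, a k ^ 2 := tsum_nonneg fun k => sq_nonneg _
  have hSb0 : 0 ≤ ∑' k : ℤ, b k ^ 2 := tsum_nonneg fun k => sq_nonneg _
  -- pointwise key bound
  have hkey : ∀ k : ℤ, (1 + (k : ℝ) ^ 2) ^ r * ‖w k‖ ^ 2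
      ≤ (C₀ ^ 2 * ((∑' k : ℤ, a k ^ 2) * (∑' k : ℤ, b k ^ 2))) * (1 / (k : ℝ) ^ 2) := by
    intro k
    by_cases hk : k = 0
    · subst hk
      simp [hw_def]
    · have hkne : (k : ℝ) ≠ 0 := Int.cast_ne_zero.mpr hk
      have hxk : (1 : ℝ) ≤ |(k : ℝ)| := by
        have h1 : (1 : ℤ) ≤ |k| := Int.one_le_abs hk
        calc (1 : ℝ) = ((1 : ℤ) : ℝ) := by norm_num
          _ ≤ ((|k| : ℤ) : ℝ) := by exact_mod_cast h1
          _ = |(k : ℝ)| := by push_cast; rfl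
      have hb2' : Summable fun p : ℤ => b (k - p) ^ 2 :=
        ((Equiv.subLeft k).summable_iff (f := fun q : ℤ => b q ^ 2)).2 hb2
      have hb2'' : (∑' p : ℤ, b (k - p) ^ 2) = ∑' q : ℤ, b q ^ 2 :=
        (Equiv.subLeft k).tsum_eq fun q : ℤ => b q ^ 2
      have habs : Summable fun p : ℤ => a p * b (k - p) :=
        stmt9_summable_mul_of_sq ha_nonneg (fun p => hb_nonneg _) ha2 hb2'
      have hterm : ∀ p : ℤ, (P k * ((k : ℝ) ^ 2)⁻¹) * (‖c p‖ * ‖d (k - p)‖)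
          ≤ (C₀ / |(k : ℝ)|) * (a p * b (k - p)) := by
        intro p
        have htri : |(k : ℝ)| ≤ |(p : ℝ)| + |((k - p : ℤ) : ℝ)| := by
          have hsplit : (k : ℝ) = (p : ℝ) + ((k - p : ℤ) : ℝ) := by push_cast; ring
          calc |(k : ℝ)| = |(p : ℝ) + ((k - p : ℤ) : ℝ)| := by rw [← hsplit]
            _ ≤ |(p : ℝ)| + |((k - p : ℤ) : ℝ)| := abs_add_le _ _
        have hker := stmt9_kernel (r := r) hr hxk (abs_nonneg (p : ℝ))
          (abs_nonneg ((k - p : ℤ) : ℝ)) htri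
        rw [_root_.sq_abs, _root_.sq_abs, _root_.sq_abs, ← hC₀] at hker
        calc (P k * ((k : ℝ) ^ 2)⁻¹) * (‖c p‖ * ‖d (k - p)‖)
            ≤ (P k * ((k : ℝ) ^ 2)⁻¹)
                * ((|(p : ℝ)| * ‖fc g p‖) * (|((k - p : ℤ) : ℝ)| * ‖fc f (k - p)‖)) := by
              apply mul_le_mul_of_nonneg_left ?_
                (mul_nonneg (hPpos k).le (by positivity))
              exact mul_le_mul (hnc p) (hnd (k - p)) (norm_nonneg _) (by positivity)
          _ = ((1 + (k : ℝ) ^ 2) ^ (r / 2) * ((k : ℝ) ^ 2)⁻¹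
                * (|(p : ℝ)| * |((k - p : ℤ) : ℝ)|)) * (‖fc g p‖ * ‖fc f (k - p)‖) := by
              simp only [hP_def]; ring
          _ ≤ ((C₀ / |(k : ℝ)|) * ((1 + (p : ℝ) ^ 2) ^ (r / 2)
                * (1 + ((k - p : ℤ) : ℝ) ^ 2) ^ (r / 2))) * (‖fc g p‖ * ‖fc f (k - p)‖) := by
              apply mul_le_mul_of_nonneg_right hker
                (mul_nonneg (norm_nonneg _) (norm_nonneg _))
          _ = (C₀ / |(k : ℝ)|) * (a p * b (k - p)) := by
              simp only [ha_def, hb_def, hP_def]; ring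
      have step1 : P k * ‖w k‖ ≤ (C₀ / |(k : ℝ)|)
          * (Real.sqrt (∑' q : ℤ, a q ^ 2) * Real.sqrt (∑' q : ℤ, b q ^ 2)) := by
        calc P k * ‖w k‖ = (P k * ((k : ℝ) ^ 2)⁻¹) * ‖e k‖ := by
              rw [hwnorm k hk]; ring
          _ ≤ (P k * ((k : ℝ) ^ 2)⁻¹) * (∑' p : ℤ, ‖c p‖ * ‖d (k - p)‖) :=
              mul_le_mul_of_nonneg_left (hE k) (mul_nonneg (hPpos k).le (by positivity))
          _ = ∑' p : ℤ, (P k * ((k : ℝ) ^ 2)⁻¹) * (‖c p‖ * ‖d (k - p)‖) := tsum_mul_left.symm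
          _ ≤ ∑' p : ℤ, (C₀ / |(k : ℝ)|) * (a p * b (k - p)) :=
              Summable.tsum_le_tsum hterm ((hfib k).mul_left _) (habs.mul_left _)
          _ = (C₀ / |(k : ℝ)|) * ∑' p : ℤ, a p * b (k - p) := tsum_mul_left
          _ ≤ (C₀ / |(k : ℝ)|)
              * (Real.sqrt (∑' p : ℤ, a p ^ 2) * Real.sqrt (∑' p : ℤ, b (k - p) ^ 2)) := by
              apply mul_le_mul_of_nonneg_left
                (stmt9_tsum_cauchy_schwarz ha_nonneg (fun p => hb_nonneg _) ha2 hb2')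
                (by positivity)
          _ = (C₀ / |(k : ℝ)|)
              * (Real.sqrt (∑' q : ℤ, a q ^ 2) * Real.sqrt (∑' q : ℤ, b q ^ 2)) := by
              rw [hb2'']
      have hsq := pow_le_pow_left₀ (mul_nonneg (hPpos k).le (norm_nonneg _)) step1 2
      calc (1 + (k : ℝ) ^ 2) ^ r * ‖w k‖ ^ 2 = (P k * ‖w k‖) ^ 2 := by
            rw [mul_pow, hP2 k]
        _ ≤ ((C₀ / |(k : ℝ)|)
              * (Real.sqrt (∑' q : ℤ, a q ^ 2) * Real.sqrt (∑' q : ℤ, b q ^ 2))) ^ 2 := hsq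
        _ = (C₀ ^ 2 * ((∑' k : ℤ, a k ^ 2) * (∑' k : ℤ, b k ^ 2))) * (1 / (k : ℝ) ^ 2) := by
            rw [mul_pow (C₀ / |(k : ℝ)|), div_pow, _root_.sq_abs, mul_pow (Real.sqrt _) (Real.sqrt _) 2, Real.sq_sqrt hSa0, Real.sq_sqrt hSb0]
            ring
  -- sum up
  have hfcW : ∀ k : ℤ, fc (absD (-2) ((absD 1 g) * (absD 1 f))) k = w k := by
    intro k
    rw [hW]
    exact stmt9_fc_tsum hw_norm k
  have hsum_le : sNormSq r (absD (-2) ((absD 1 g) * (absD 1 f)))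
      ≤ (C₀ ^ 2 * ((∑' k : ℤ, a k ^ 2) * (∑' k : ℤ, b k ^ 2))) * S₂ := by
    have h1 : sNormSq r (absD (-2) ((absD 1 g) * (absD 1 f)))
        = ∑' k : ℤ, (1 + (k : ℝ) ^ 2) ^ r * ‖w k‖ ^ 2 := by
      unfold sNormSq
      exact tsum_congr fun k => by rw [hfcW k]
    rw [h1]
    have hmaj : Summable fun k : ℤ =>
        (C₀ ^ 2 * ((∑' k : ℤ, a k ^ 2) * (∑' k : ℤ, b k ^ 2))) * (1 / (k : ℝ) ^ 2) :=
      hS₂sum.mul_left _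
    calc (∑' k : ℤ, (1 + (k : ℝ) ^ 2) ^ r * ‖w k‖ ^ 2)
        ≤ ∑' k : ℤ, (C₀ ^ 2 * ((∑' k : ℤ, a k ^ 2) * (∑' k : ℤ, b k ^ 2))) * (1 / (k : ℝ) ^ 2) :=
          Summable.tsum_le_tsum hkey (Summable.of_nonneg_of_le (fun k => by positivity) hkey hmaj) hmaj
      _ = (C₀ ^ 2 * ((∑' k : ℤ, a k ^ 2) * (∑' k : ℤ, b k ^ 2))) * S₂ := tsum_mul_left
  have hfinal_eq : (C₀ ^ 2 * ((∑' k : ℤ, a k ^ 2) * (∑' k : ℤ, b k ^ 2))) * S₂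
      = (C₀ * Real.sqrt S₂ * (Real.sqrt (∑' k : ℤ, b k ^ 2) * Real.sqrt (∑' k : ℤ, a k ^ 2))) ^ 2 := by
    rw [mul_pow (C₀ * Real.sqrt S₂), mul_pow C₀ (Real.sqrt S₂), mul_pow (Real.sqrt _) (Real.sqrt _) 2,
      Real.sq_sqrt hS₂nonneg, Real.sq_sqrt hSb0, Real.sq_sqrt hSa0]
    ring
  have h3 : 0 ≤ sNorm r f := Real.sqrt_nonneg _
  have h4 : 0 ≤ sNorm r g := Real.sqrt_nonneg _
  calc sNorm r (absD (-2) ((absD 1 g) * (absD 1 f)))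
      = Real.sqrt (sNormSq r (absD (-2) ((absD 1 g) * (absD 1 f)))) := rfl
    _ ≤ Real.sqrt ((C₀ ^ 2 * ((∑' k : ℤ, a k ^ 2) * (∑' k : ℤ, b k ^ 2))) * S₂) :=
        Real.sqrt_le_sqrt hsum_le
    _ = C₀ * Real.sqrt S₂ * (Real.sqrt (∑' k : ℤ, b k ^ 2) * Real.sqrt (∑' k : ℤ, a k ^ 2)) := by
        rw [hfinal_eq, Real.sqrt_sq (by positivity)]
    _ = C₀ * Real.sqrt S₂ * (sNorm r f * sNorm r g) := by
        unfold sNorm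
        rw [hSf, hSa]
    _ ≤ (C₀ * Real.sqrt S₂ + 1) * sNorm r f * sNorm r g := by
        calc C₀ * Real.sqrt S₂ * (sNorm r f * sNorm r g)
            ≤ (C₀ * Real.sqrt S₂ + 1) * (sNorm r f * sNorm r g) :=
              mul_le_mul_of_nonneg_right (by linarith) (mul_nonneg h3 h4)
          _ = (C₀ * Real.sqrt S₂ + 1) * sNorm r f * sNorm r g := by ring
end
end
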